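/- A coarse space (X,𝓔) whose coarse structure has a linearly ordered base (a base totally ordered by inclusion) is normal. -/

import Mathlib

def relComp {X : Type*} (ε δ : Set (X × X)) : Set (X × X) :=
  {p | ∃ y, (p.1, y) ∈ ε ∧ (y, p.2) ∈ δ}

def relInv {X : Type*} (ε : Set (X × X)) : Set (X × X) :=
  {p | (p.2, p.1) ∈ ε}

def IsBallStructure {X : Type*} (E : Set (Set (X × X))) : Prop :=
  (∀ ε ∈ E, SetRel.id ⊆ ε) ∧
  (∀ ε ∈ E, ∀ δ ∈ E, ∃ lam ∈ E, relComp ε (relInv δ) ⊆ lam) ∧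
  ⋃₀ E = Set.univ

def IsCoarseStructure {X : Type*} (E : Set (Set (X × X))) : Prop :=
  IsBallStructure E ∧
  ∀ ε ∈ E, ∀ δ : Set (X × X), SetRel.id ⊆ δ → δ ⊆ ε → δ ∈ E

def ball {X : Type*} (ε : Set (X × X)) (x : X) : Set X :=
  {y | (x, y) ∈ ε}

/-- `B(Y,ε) = ⋃_{y ∈ Y} B(y,ε)`. -/
def ballOf {X : Type*} (ε : Set (X × X)) (Y : Set X) : Set X :=
  {x | ∃ y ∈ Y, (y, x) ∈ ε}

def IsBoundedIn {X : Type*} (E : Set (Set (X × X))) (B : Set X) : Prop :=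
  B = ∅ ∨ ∃ x : X, ∃ ε ∈ E, B ⊆ ball ε x

/-- `Y` and `Z` are asymptotically disjoint. -/
def AsympDisjoint {X : Type*} (E : Set (Set (X × X))) (Y Z : Set X) : Prop :=
  ∀ ε ∈ E, IsBoundedIn E (ballOf ε Y ∩ ballOf ε Z)

/-- `U` is an asymptotic neighborhood of `A`. -/
def IsAsympNbhd {X : Type*} (E : Set (Set (X × X))) (U A : Set X) : Prop :=
  AsympDisjoint E A Uᶜ


lemma boundedIn_mono {X : Type*} {E : Set (Set (X × X))} {A B : Set X}
    (hAB : A ⊆ B) (hB : IsBoundedIn E B) : IsBoundedIn E A := by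
  rcases hB with hB | ⟨x, ε, hε, hb⟩
  · left
    rw [hB] at hAB
    exact Set.subset_eq_empty hAB rfl
  · exact Or.inr ⟨x, ε, hε, hAB.trans hb⟩

lemma asympDisjoint_symm {X : Type*} {E : Set (Set (X × X))} {Y Z : Set X}
    (hYZ : AsympDisjoint E Y Z) : AsympDisjoint E Z Y := by
  intro ε hε
  have := hYZ ε hε
  rwa [Set.inter_comm] at this

lemma nbhd_aux {X : Type*} (𝓔 𝓑 : Set (Set (X × X)))
    (h : IsCoarseStructure 𝓔) (hsub : 𝓑 ⊆ 𝓔)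
    (hbase : ∀ ε ∈ 𝓔, ∃ b ∈ 𝓑, ε ⊆ b)
    (Y Z : Set X) (hYZ : AsympDisjoint 𝓔 Y Z) (hne : 𝓔.Nonempty) :
    IsAsympNbhd 𝓔 {x | ∃ β ∈ 𝓑, x ∈ ballOf β Y ∧ x ∉ ballOf β Z} Y := by
  classical
  obtain ⟨⟨hdiag, hcomp, _⟩, hdown⟩ := h
  obtain ⟨ε₀, hε₀⟩ := hne
  have hid : SetRel.id ∈ 𝓔 := hdown ε₀ hε₀ SetRel.id (subset_refl _) (hdiag ε₀ hε₀)
  have hinv : ∀ ε ∈ 𝓔, relInv ε ∈ 𝓔 := by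
    intro ε hε
    obtain ⟨lam, hlam, hl⟩ := hcomp SetRel.id hid ε hε
    refine hdown lam hlam (relInv ε) ?_ ?_
    · rintro ⟨a, b⟩ hp
      simp only [SetRel.mem_id] at hp
      subst hp
      exact hdiag ε hε rfl
    · rintro ⟨a, b⟩ hp
      exact hl ⟨a, rfl, hp⟩
  have hcomp' : ∀ ε ∈ 𝓔, ∀ δ ∈ 𝓔, ∃ lam ∈ 𝓔, relComp ε δ ⊆ lam := by
    intro ε hε δ hδ
    obtain ⟨lam, hlam, hl⟩ := hcomp ε hε (relInv δ) (hinv δ hδ)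
    refine ⟨lam, hlam, ?_⟩
    rintro ⟨a, b⟩ ⟨w, hw1, hw2⟩
    exact hl ⟨w, hw1, hw2⟩
  intro ε hε
  obtain ⟨lam, hlam, hl⟩ := hcomp ε hε ε hε
  obtain ⟨β, hβ, hlβ⟩ := hbase lam hlam
  obtain ⟨μ, hμ, hβμ⟩ := hcomp' β (hsub hβ) ε hε
  refine boundedIn_mono ?_ (hYZ μ hμ)
  rintro x ⟨⟨y, hy, hyx⟩, ⟨u, hu, hux⟩⟩
  have huYβ : u ∈ ballOf β Y := ⟨y, hy, hlβ (hl ⟨x, hyx, hux⟩)⟩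
  have huZβ : u ∈ ballOf β Z := by
    by_contra hc
    exact hu ⟨β, hβ, huYβ, hc⟩
  obtain ⟨z, hz, hzu⟩ := huZβ
  refine ⟨⟨y, hy, hβμ ⟨y, ?_, hyx⟩⟩, ⟨z, hz, hβμ ⟨u, hzu, hux⟩⟩⟩
  exact hdiag β (hsub hβ) rfl

theorem stmt17 {X : Type*} (𝓔 𝓑 : Set (Set (X × X)))
    (h : IsCoarseStructure 𝓔) (hsub : 𝓑 ⊆ 𝓔)
    (hbase : ∀ ε ∈ 𝓔, ∃ b ∈ 𝓑, ε ⊆ b)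
    (hlin : ∀ b ∈ 𝓑, ∀ c ∈ 𝓑, b ⊆ c ∨ c ⊆ b)
    (Y Z : Set X) (hYZ : AsympDisjoint 𝓔 Y Z) :
    ∃ U V : Set X, Disjoint U V ∧ IsAsympNbhd 𝓔 U Y ∧ IsAsympNbhd 𝓔 V Z := by
  classical
  rcases Set.eq_empty_or_nonempty 𝓔 with hE | hne
  · refine ⟨∅, ∅, disjoint_bot_left, ?_, ?_⟩ <;>
      exact fun ε hε => absurd hε (by simp [hE])
  refine ⟨{x | ∃ β ∈ 𝓑, x ∈ ballOf β Y ∧ x ∉ ballOf β Z},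
    {x | ∃ β ∈ 𝓑, x ∈ ballOf β Z ∧ x ∉ ballOf β Y}, ?_, ?_, ?_⟩
  · rw [Set.disjoint_left]
    rintro x ⟨β, hβ, hxY, hxZ⟩ ⟨γ, hγ, hxZ', hxY'⟩
    rcases hlin β hβ γ hγ with hbc | hcb
    · obtain ⟨y, hy, hyx⟩ := hxY
      exact hxY' ⟨y, hy, hbc hyx⟩
    · obtain ⟨z, hz, hzx⟩ := hxZ'
      exact hxZ ⟨z, hz, hcb hzx⟩
  · exact nbhd_aux 𝓔 𝓑 h hsub hbase Y Z hYZ hne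
  · exact nbhd_aux 𝓔 𝓑 h hsub hbase Z Y (asympDisjoint_symm hYZ) hne
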